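/- There exists a constant C ≥ 0 such that for every absolutely continuous function f : [-1,0] → ℂ with derivative f' ∈ L²(-1,0), every g ∈ L²(-1,0), every real s ≠ 0 and every ξ ∈ [-1,0], one has |∫_{-1}^{ξ} cos(s(ξ−r))·(i·s·f(r) + g(r)) dr| ≤ C·‖f‖_{H¹} + ‖g‖_{L²(-1,0)}. -/

import Mathlib

open MeasureTheory

/-- The `L²` norm of `f` on the interval `(a, b)`. -/
noncomputable def L2norm (a b : ℝ) (f : ℝ → ℂ) : ℝ :=
  Real.sqrt (∫ x in a..b, ‖f x‖ ^ 2)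

/-- The `H¹(-1,0)` norm of an absolutely continuous function `f` with derivative `f'`. -/
noncomputable def H1norm (f f' : ℝ → ℂ) : ℝ :=
  Real.sqrt ((∫ x in (-1:ℝ)..0, ‖f x‖ ^ 2) + (∫ x in (-1:ℝ)..0, ‖f' x‖ ^ 2))

lemma cos_integral_aux (s : ℝ) (hs : s ≠ 0) (ξ a b : ℝ) :
    ∫ r in a..b, Real.cos (s * (ξ - r)) =
      (Real.sin (s * (ξ - a)) - Real.sin (s * (ξ - b))) / s := by
  have h : ∀ r ∈ Set.uIcc a b,
      HasDerivAt (fun r => -Real.sin (s * (ξ - r)) / s) (Real.cos (s * (ξ - r))) r := by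
    intro r _
    have hu : HasDerivAt (fun r : ℝ => s * (ξ - r)) (-s) r := by
      simpa using ((hasDerivAt_const r ξ).sub (hasDerivAt_id r)).const_mul s
    have := ((Real.hasDerivAt_sin (s * (ξ - r))).comp r hu).neg.div_const s
    have e : -(Real.cos (s * (ξ - r)) * -s) / s = Real.cos (s * (ξ - r)) := by
      rw [div_eq_iff hs]; ring
    rw [e] at this
    exact this
  rw [intervalIntegral.integral_eq_sub_of_hasDerivAt h]
  · ring
  · exact (Real.continuous_cos.comp (by continuity)).intervalIntegrable a b

lemma complex_cos_integral (s : ℝ) (hs : s ≠ 0) (ξ a b : ℝ) :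
    ∫ r in a..b, Complex.cos (↑s * (↑ξ - ↑r)) =
      ↑((Real.sin (s * (ξ - a)) - Real.sin (s * (ξ - b))) / s) := by
  have : ∀ r : ℝ, Complex.cos (↑s * (↑ξ - ↑r)) = ((Real.cos (s * (ξ - r)) : ℝ) : ℂ) := by
    intro r
    have h0 : (↑s * (↑ξ - ↑r) : ℂ) = ((s * (ξ - r) : ℝ) : ℂ) := by push_cast; ring
    rw [h0, Complex.ofReal_cos]
  simp_rw [this]
  rw [intervalIntegral.integral_ofReal, cos_integral_aux s hs ξ a b]

lemma norm_ccos_le (s ξ r : ℝ) : ‖Complex.cos (↑s * (↑ξ - ↑r))‖ ≤ 1 := by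
  have h0 : (↑s * (↑ξ - ↑r) : ℂ) = ((s * (ξ - r) : ℝ) : ℂ) := by push_cast; ring
  rw [h0, ← Complex.ofReal_cos, Complex.norm_real]
  exact Real.abs_cos_le_one _

lemma key_identity (s ξ : ℝ) (hs : s ≠ 0) (φ : ℝ → ℂ)
    (hφ : IntegrableOn φ (Set.Ioc (-1) ξ) volume) :
    ∫ r in Set.Ioc (-1:ℝ) ξ, Complex.cos (↑s * (↑ξ - ↑r)) * (∫ t in Set.Ioc (-1:ℝ) r, φ t) =
      ∫ t in Set.Ioc (-1:ℝ) ξ, (↑(Real.sin (s * (ξ - t)) / s) : ℂ) * φ t := by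
  set μ := volume.restrict (Set.Ioc (-1:ℝ) ξ) with hμ
  set S : Set (ℝ × ℝ) := {p | p.2 ≤ p.1} with hSdef
  have hS : MeasurableSet S := measurableSet_le measurable_snd measurable_fst
  set K : ℝ → ℝ → ℂ := fun r t =>
    S.indicator (fun p : ℝ × ℝ => Complex.cos (↑s * (↑ξ - ↑p.1)) * φ p.2) (r, t) with hK
  have ccos : Continuous fun r : ℝ => Complex.cos (↑s * (↑ξ - ↑r)) := by continuity
  have hcos_int : Integrable (fun r : ℝ => Complex.cos (↑s * (↑ξ - ↑r))) μ :=
    ccos.integrableOn_Ioc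
  have h_int : Integrable (Function.uncurry K) (μ.prod μ) := by
    have : Integrable (fun z : ℝ × ℝ => Complex.cos (↑s * (↑ξ - ↑z.1)) * φ z.2) (μ.prod μ) :=
      hcos_int.mul_prod hφ
    have h2 := this.indicator hS
    apply h2.congr
    filter_upwards with p
    simp [Function.uncurry, hK]
  have step1 : ∀ r ∈ Set.Ioc (-1:ℝ) ξ,
      (∫ t, K r t ∂μ) = Complex.cos (↑s * (↑ξ - ↑r)) * (∫ t in Set.Ioc (-1:ℝ) r, φ t) := by
    intro r hr
    have h1 : ∀ t : ℝ, K r t =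
        (Set.Iic r).indicator (fun t => Complex.cos (↑s * (↑ξ - ↑r)) * φ t) t := by
      intro t
      simp only [hK, Set.indicator, hSdef, Set.mem_setOf_eq, Set.mem_Iic]
    simp_rw [h1]
    rw [hμ, setIntegral_indicator measurableSet_Iic, Set.Ioc_inter_Iic,
      min_eq_right hr.2, integral_const_mul]
  have step3 : ∀ t ∈ Set.Ioc (-1:ℝ) ξ,
      (∫ r, K r t ∂μ) = (↑(Real.sin (s * (ξ - t)) / s) : ℂ) * φ t := by
    intro t ht
    have h1 : ∀ r : ℝ, K r t =
        ((Set.Ici t).indicator (fun r => Complex.cos (↑s * (↑ξ - ↑r))) r) * φ t := by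
      intro r
      simp only [hK, Set.indicator, hSdef, Set.mem_setOf_eq, Set.mem_Ici]
      split <;> simp
    simp_rw [h1]
    rw [hμ, integral_mul_const, setIntegral_indicator measurableSet_Ici]
    have hset : Set.Ioc (-1:ℝ) ξ ∩ Set.Ici t = Set.Icc t ξ := by
      ext r
      simp only [Set.mem_inter_iff, Set.mem_Ioc, Set.mem_Ici, Set.mem_Icc]
      constructor
      · rintro ⟨⟨_, h2⟩, h3⟩; exact ⟨h3, h2⟩
      · rintro ⟨h1', h2⟩; exact ⟨⟨lt_of_lt_of_le ht.1 h1', h2⟩, h1'⟩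
    rw [hset, integral_Icc_eq_integral_Ioc, ← intervalIntegral.integral_of_le ht.2,
      complex_cos_integral s hs ξ t ξ]
    norm_num
  calc ∫ r in Set.Ioc (-1:ℝ) ξ, Complex.cos (↑s * (↑ξ - ↑r)) * (∫ t in Set.Ioc (-1:ℝ) r, φ t)
      = ∫ r, ∫ t, K r t ∂μ ∂μ :=
        (setIntegral_congr_fun measurableSet_Ioc fun r hr => step1 r hr).symm
    _ = ∫ t, ∫ r, K r t ∂μ ∂μ := integral_integral_swap h_int
    _ = ∫ t in Set.Ioc (-1:ℝ) ξ, (↑(Real.sin (s * (ξ - t)) / s) : ℂ) * φ t :=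
        setIntegral_congr_fun measurableSet_Ioc fun t ht => step3 t ht

lemma l1_le_sqrt_l2 {μ : Measure ℝ} [IsFiniteMeasure μ] (hμ : (μ Set.univ).toReal ≤ 1)
    {h : ℝ → ℂ} (hm : MemLp h 2 μ) :
    ∫ x, ‖h x‖ ∂μ ≤ Real.sqrt (∫ x, ‖h x‖ ^ 2 ∂μ) := by
  have hpq : Real.HolderConjugate 2 2 := Real.holderConjugate_iff.mpr ⟨one_lt_two, by norm_num⟩
  have h1 : MemLp (fun _ : ℝ => (1:ℝ)) (ENNReal.ofReal 2) μ := memLp_const 1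
  have h2 : MemLp (fun x => ‖h x‖) (ENNReal.ofReal 2) μ := by
    simpa [ENNReal.ofReal_ofNat] using hm.norm
  have := integral_mul_le_Lp_mul_Lq_of_nonneg hpq
    (Filter.Eventually.of_forall fun _ => zero_le_one)
    (Filter.Eventually.of_forall fun x => norm_nonneg _) h1 h2
  simp only [one_mul] at this
  calc ∫ x, ‖h x‖ ∂μ
      ≤ (∫ _x, (1:ℝ) ^ (2:ℝ) ∂μ) ^ (1/(2:ℝ)) * (∫ x, ‖h x‖ ^ (2:ℝ) ∂μ) ^ (1/(2:ℝ)) := this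
    _ ≤ 1 * (∫ x, ‖h x‖ ^ (2:ℝ) ∂μ) ^ (1/(2:ℝ)) := by
        have hb : (0:ℝ) ≤ (∫ x, ‖h x‖ ^ (2:ℝ) ∂μ) ^ (1/(2:ℝ)) := by positivity
        refine mul_le_mul_of_nonneg_right ?_ hb
        have : (∫ _x, (1:ℝ) ^ (2:ℝ) ∂μ) = (μ Set.univ).toReal := by
          simp [Real.one_rpow, measureReal_def]
        rw [this]
        calc ((μ Set.univ).toReal) ^ (1/(2:ℝ)) ≤ (1:ℝ) ^ (1/(2:ℝ)) :=
              Real.rpow_le_rpow ENNReal.toReal_nonneg hμ (by norm_num)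
        _ = 1 := Real.one_rpow _
    _ = Real.sqrt (∫ x, ‖h x‖ ^ 2 ∂μ) := by
        rw [one_mul, Real.sqrt_eq_rpow]
        congr 1
        refine integral_congr_ae (Filter.Eventually.of_forall fun x => ?_)
        beta_reduce
        rw [show ((2:ℝ)) = ((2:ℕ):ℝ) by norm_num, Real.rpow_natCast]

/-- There is a constant `C ≥ 0` such that for every absolutely continuous `f : [-1,0] → ℂ`
with derivative `f' ∈ L²(-1,0)`, every `g ∈ L²(-1,0)`, every real `s ≠ 0` and every
`ξ ∈ [-1,0]`, one has
`|∫_{-1}^{ξ} cos(s(ξ−r))·(i·s·f(r) + g(r)) dr| ≤ C·‖f‖_{H¹} + ‖g‖_{L²(-1,0)}`. -/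
theorem cosine_convolution_estimate :
    ∃ C : ℝ, 0 ≤ C ∧ ∀ f f' g : ℝ → ℂ,
      (∀ x ∈ Set.Icc (-1:ℝ) 0, f x = f (-1) + ∫ t in (-1:ℝ)..x, f' t) →
      MemLp f' 2 (volume.restrict (Set.Ioo (-1:ℝ) 0)) →
      MemLp g 2 (volume.restrict (Set.Ioo (-1:ℝ) 0)) →
      ∀ s : ℝ, s ≠ 0 → ∀ ξ ∈ Set.Icc (-1:ℝ) 0,
        ‖∫ r in (-1:ℝ)..ξ, Complex.cos (s * (ξ - r)) * (Complex.I * s * f r + g r)‖ ≤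
          C * H1norm f f' + L2norm (-1) 0 g := by
  refine ⟨3, by norm_num, ?_⟩
  intro f f' g hf hf' hg s hs ξ hξ
  obtain ⟨hξ1, hξ0⟩ := hξ
  -- switch Ioo to Ioc
  have hIooIoc : volume.restrict (Set.Ioo (-1:ℝ) 0) = volume.restrict (Set.Ioc (-1:ℝ) 0) :=
    Measure.restrict_congr_set Ioo_ae_eq_Ioc
  rw [hIooIoc] at hf' hg
  set B : Set ℝ := Set.Ioc (-1:ℝ) 0 with hB
  set A : Set ℝ := Set.Ioc (-1:ℝ) ξ with hA
  have hAB : A ⊆ B := Set.Ioc_subset_Ioc_right hξ0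
  haveI hfinB : IsFiniteMeasure (volume.restrict B) := by
    constructor
    rw [Measure.restrict_apply_univ, hB, Real.volume_Ioc]
    exact ENNReal.ofReal_lt_top
  have hf'int : IntegrableOn f' B volume := hf'.integrable one_le_two
  have hgint : IntegrableOn g B volume := hg.integrable one_le_two
  have hf'A : IntegrableOn f' A volume := hf'int.mono_set hAB
  have hgA : IntegrableOn g A volume := hgint.mono_set hAB
  -- the continuous representative
  set F : ℝ → ℂ := fun x => f (-1) + ∫ t in Set.Ioc (-1:ℝ) x, f' t with hFdef
  have hf'Icc : IntegrableOn f' (Set.Icc (-1:ℝ) 0) volume :=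
    hf'int.congr_set_ae Ioc_ae_eq_Icc.symm
  have hFcont : ContinuousOn F (Set.Icc (-1:ℝ) 0) :=
    continuousOn_const.add (intervalIntegral.continuousOn_primitive hf'Icc)
  have hfF : ∀ x ∈ Set.Icc (-1:ℝ) 0, f x = F x := by
    intro x hx
    rw [hf x hx, hFdef]
    simp only
    rw [intervalIntegral.integral_of_le hx.1]
  have hFB : IntegrableOn F B volume :=
    (hFcont.integrableOn_Icc).mono_set Set.Ioc_subset_Icc_self
  have hfB : IntegrableOn f B volume := by
    refine hFB.congr ?_
    refine ((ae_restrict_iff' measurableSet_Ioc).2 ?_)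
    exact Filter.Eventually.of_forall fun x hx => (hfF x (Set.Ioc_subset_Icc_self hx)).symm
  have hfA : IntegrableOn f A volume := hfB.mono_set hAB
  -- MemLp f
  obtain ⟨M, hM⟩ := isCompact_Icc.exists_bound_of_continuousOn hFcont
  have haesm : AEStronglyMeasurable f (volume.restrict B) := hfB.aestronglyMeasurable
  have hmemf : MemLp f 2 (volume.restrict B) := by
    refine (memLp_top_of_bound haesm M ?_).mono_exponent le_top
    refine (ae_restrict_iff' measurableSet_Ioc).2 ?_
    refine Filter.Eventually.of_forall fun x hx => ?_
    rw [hfF x (Set.Ioc_subset_Icc_self hx)]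
    exact hM x (Set.Ioc_subset_Icc_self hx)
  -- cos facts
  have ccos : Continuous fun r : ℝ => Complex.cos (↑s * (↑ξ - ↑r)) :=
    Complex.continuous_cos.comp (continuous_const.mul (continuous_const.sub Complex.continuous_ofReal))
  have hcosA : IntegrableOn (fun r : ℝ => Complex.cos (↑s * (↑ξ - ↑r))) A volume :=
    ccos.integrableOn_Ioc
  have hcos_f : IntegrableOn (fun r => Complex.cos (↑s * (↑ξ - ↑r)) * f r) A volume :=
    hfA.bdd_mul ccos.aestronglyMeasurable (Filter.Eventually.of_forall fun r => norm_ccos_le s ξ r)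
  have hcos_g : IntegrableOn (fun r => Complex.cos (↑s * (↑ξ - ↑r)) * g r) A volume :=
    hgA.bdd_mul ccos.aestronglyMeasurable (Filter.Eventually.of_forall fun r => norm_ccos_le s ξ r)
  have hvolB : volume B < ⊤ := by rw [hB, Real.volume_Ioc]; exact ENNReal.ofReal_lt_top
  have hcos_P : IntegrableOn
      (fun r : ℝ => Complex.cos (↑s * (↑ξ - ↑r)) * (∫ t in Set.Ioc (-1:ℝ) r, f' t)) A volume := by
    have hPA : IntegrableOn (fun r : ℝ => ∫ t in Set.Ioc (-1:ℝ) r, f' t) A volume := by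
      have h1 : IntegrableOn F A volume := hFB.mono_set hAB
      have h2 : IntegrableOn (fun _ : ℝ => f (-1)) A volume :=
        integrableOn_const (lt_of_le_of_lt (measure_mono hAB) hvolB).ne
      have h3 := h1.sub h2
      refine h3.congr (Filter.Eventually.of_forall fun r => ?_)
      simp only [Pi.sub_apply, hFdef]
      ring
    exact hPA.bdd_mul ccos.aestronglyMeasurable (Filter.Eventually.of_forall fun r => norm_ccos_le s ξ r)
  -- rewrite the goal as a set integral and split it
  rw [intervalIntegral.integral_of_le hξ1]
  have split1 : (∫ r in Set.Ioc (-1:ℝ) ξ, Complex.cos (↑s * (↑ξ - ↑r)) * (Complex.I * ↑s * f r + g r))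
      = Complex.I * ↑s * (∫ r in A, Complex.cos (↑s * (↑ξ - ↑r)) * f r)
        + ∫ r in A, Complex.cos (↑s * (↑ξ - ↑r)) * g r := by
    have hpt : ∀ r : ℝ, Complex.cos (↑s * (↑ξ - ↑r)) * (Complex.I * ↑s * f r + g r)
        = Complex.I * ↑s * (Complex.cos (↑s * (↑ξ - ↑r)) * f r)
          + Complex.cos (↑s * (↑ξ - ↑r)) * g r := fun r => by ring
    simp_rw [hpt]
    rw [← hA, integral_add (hcos_f.const_mul _) hcos_g, integral_const_mul]
  have split2 : (∫ r in A, Complex.cos (↑s * (↑ξ - ↑r)) * f r)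
      = f (-1) * (↑(Real.sin (s * (ξ + 1)) / s) : ℂ)
        + ∫ t in A, (↑(Real.sin (s * (ξ - t)) / s) : ℂ) * f' t := by
    have e1 : (∫ r in A, Complex.cos (↑s * (↑ξ - ↑r)) * f r)
        = ∫ r in A, (f (-1) * Complex.cos (↑s * (↑ξ - ↑r))
            + Complex.cos (↑s * (↑ξ - ↑r)) * (∫ t in Set.Ioc (-1:ℝ) r, f' t)) := by
      refine setIntegral_congr_fun measurableSet_Ioc fun r hr => ?_
      have hrIcc : r ∈ Set.Icc (-1:ℝ) 0 := ⟨le_of_lt hr.1, le_trans hr.2 hξ0⟩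
      rw [hfF r hrIcc, hFdef]
      simp only
      ring
    have e2 : (∫ r in A, Complex.cos (↑s * (↑ξ - ↑r)))
        = (↑(Real.sin (s * (ξ + 1)) / s) : ℂ) := by
      rw [hA, ← intervalIntegral.integral_of_le hξ1, complex_cos_integral s hs ξ (-1) ξ]
      norm_num
    rw [e1, integral_add (hcosA.const_mul _) hcos_P, integral_const_mul, e2, hA,
      key_identity s ξ hs f' hf'A]
  rw [split1, split2, mul_add]
  -- simplify the two f-terms
  have hsC : (↑s : ℂ) ≠ 0 := Complex.ofReal_ne_zero.2 hs
  have hterm1 : Complex.I * ↑s * (f (-1) * (↑(Real.sin (s * (ξ + 1)) / s) : ℂ))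
      = Complex.I * f (-1) * ↑(Real.sin (s * (ξ + 1))) := by
    push_cast
    field_simp
    try ring
  have hterm2 : Complex.I * ↑s * (∫ t in A, (↑(Real.sin (s * (ξ - t)) / s) : ℂ) * f' t)
      = Complex.I * ∫ t in A, (↑(Real.sin (s * (ξ - t))) : ℂ) * f' t := by
    rw [mul_assoc, ← integral_const_mul]
    congr 1
    refine integral_congr_ae (Filter.Eventually.of_forall fun t => ?_)
    beta_reduce
    push_cast
    field_simp
    try ring
  rw [hterm1, hterm2]
  -- bound each of the three terms
  have b1 : ‖Complex.I * f (-1) * ↑(Real.sin (s * (ξ + 1)))‖ ≤ ‖f (-1)‖ := by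
    rw [norm_mul, norm_mul, Complex.norm_I, one_mul, Complex.norm_real]
    calc ‖f (-1)‖ * ‖Real.sin (s * (ξ + 1))‖ ≤ ‖f (-1)‖ * 1 := by
          refine mul_le_mul_of_nonneg_left ?_ (norm_nonneg _)
          rw [Real.norm_eq_abs]
          exact Real.abs_sin_le_one _
      _ = ‖f (-1)‖ := mul_one _
  have b2 : ‖Complex.I * ∫ t in A, (↑(Real.sin (s * (ξ - t))) : ℂ) * f' t‖
      ≤ ∫ t in B, ‖f' t‖ := by
    rw [norm_mul, Complex.norm_I, one_mul]
    calc ‖∫ t in A, (↑(Real.sin (s * (ξ - t))) : ℂ) * f' t‖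
        ≤ ∫ t in A, ‖(↑(Real.sin (s * (ξ - t))) : ℂ) * f' t‖ := norm_integral_le_integral_norm _
      _ ≤ ∫ t in A, ‖f' t‖ := by
          refine integral_mono_of_nonneg (Filter.Eventually.of_forall fun t => norm_nonneg _)
            hf'A.norm (Filter.Eventually.of_forall fun t => ?_)
          beta_reduce
          rw [norm_mul, Complex.norm_real]
          calc ‖Real.sin (s * (ξ - t))‖ * ‖f' t‖ ≤ 1 * ‖f' t‖ := by
                refine mul_le_mul_of_nonneg_right ?_ (norm_nonneg _)
                rw [Real.norm_eq_abs]
                exact Real.abs_sin_le_one _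
            _ = ‖f' t‖ := one_mul _
      _ ≤ ∫ t in B, ‖f' t‖ := setIntegral_mono_set hf'int.norm
          (Filter.Eventually.of_forall fun t => norm_nonneg _) hAB.eventuallyLE
  have b3 : ‖∫ r in A, Complex.cos (↑s * (↑ξ - ↑r)) * g r‖ ≤ ∫ t in B, ‖g t‖ := by
    calc ‖∫ r in A, Complex.cos (↑s * (↑ξ - ↑r)) * g r‖
        ≤ ∫ r in A, ‖Complex.cos (↑s * (↑ξ - ↑r)) * g r‖ := norm_integral_le_integral_norm _
      _ ≤ ∫ r in A, ‖g r‖ := by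
          refine integral_mono_of_nonneg (Filter.Eventually.of_forall fun t => norm_nonneg _)
            hgA.norm (Filter.Eventually.of_forall fun r => ?_)
          beta_reduce
          rw [norm_mul]
          calc ‖Complex.cos (↑s * (↑ξ - ↑r))‖ * ‖g r‖ ≤ 1 * ‖g r‖ :=
                mul_le_mul_of_nonneg_right (norm_ccos_le s ξ r) (norm_nonneg _)
            _ = ‖g r‖ := one_mul _
      _ ≤ ∫ t in B, ‖g t‖ := setIntegral_mono_set hgint.norm
          (Filter.Eventually.of_forall fun t => norm_nonneg _) hAB.eventuallyLE
  -- L¹-L² comparisons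
  have hmeas1 : ((volume.restrict B) Set.univ).toReal ≤ 1 := by
    rw [Measure.restrict_apply_univ, hB, Real.volume_Ioc]
    norm_num
  have hCSf : ∫ x in B, ‖f x‖ ≤ Real.sqrt (∫ x in B, ‖f x‖ ^ 2) := l1_le_sqrt_l2 hmeas1 hmemf
  have hCSf' : ∫ x in B, ‖f' x‖ ≤ Real.sqrt (∫ x in B, ‖f' x‖ ^ 2) := l1_le_sqrt_l2 hmeas1 hf'
  have hCSg : ∫ x in B, ‖g x‖ ≤ Real.sqrt (∫ x in B, ‖g x‖ ^ 2) := l1_le_sqrt_l2 hmeas1 hg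
  -- comparison with the H¹ and L² norms
  have hio : ((-1:ℝ)) ≤ 0 := by norm_num
  have hH1 : Real.sqrt (∫ x in B, ‖f x‖ ^ 2) ≤ H1norm f f' := by
    rw [H1norm, intervalIntegral.integral_of_le hio, intervalIntegral.integral_of_le hio]
    exact Real.sqrt_le_sqrt (le_add_of_nonneg_right
      (setIntegral_nonneg measurableSet_Ioc fun x _ => by positivity))
  have hH2 : Real.sqrt (∫ x in B, ‖f' x‖ ^ 2) ≤ H1norm f f' := by
    rw [H1norm, intervalIntegral.integral_of_le hio, intervalIntegral.integral_of_le hio]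
    exact Real.sqrt_le_sqrt (le_add_of_nonneg_left
      (setIntegral_nonneg measurableSet_Ioc fun x _ => by positivity))
  have hL2 : Real.sqrt (∫ x in B, ‖g x‖ ^ 2) = L2norm (-1) 0 g := by
    rw [L2norm, intervalIntegral.integral_of_le hio]
  -- Sobolev bound on f(-1)
  have hconstB : IntegrableOn (fun _ : ℝ => (∫ t in B, ‖f' t‖)) B volume :=
    integrableOn_const hvolB.ne
  have hc : ‖f (-1)‖ ≤ (∫ x in B, ‖f x‖) + ∫ x in B, ‖f' x‖ := by
    have pt : ∀ x ∈ B, ‖f (-1)‖ ≤ ‖f x‖ + ∫ t in B, ‖f' t‖ := by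
      intro x hx
      have hxI : x ∈ Set.Icc (-1:ℝ) 0 := Set.Ioc_subset_Icc_self hx
      have e : f (-1) = f x - ∫ t in (-1:ℝ)..x, f' t := by rw [hf x hxI]; ring
      rw [e]
      refine le_trans (norm_sub_le _ _) ?_
      have hb : ‖∫ t in (-1:ℝ)..x, f' t‖ ≤ ∫ t in B, ‖f' t‖ := by
        calc ‖∫ t in (-1:ℝ)..x, f' t‖ ≤ ∫ t in (-1:ℝ)..x, ‖f' t‖ :=
              intervalIntegral.norm_integral_le_integral_norm hxI.1
          _ = ∫ t in Set.Ioc (-1:ℝ) x, ‖f' t‖ := intervalIntegral.integral_of_le hxI.1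
          _ ≤ ∫ t in B, ‖f' t‖ := setIntegral_mono_set hf'int.norm
              (Filter.Eventually.of_forall fun t => norm_nonneg _)
              (Set.Ioc_subset_Ioc_right hxI.2).eventuallyLE
      exact add_le_add (le_refl _) hb
    have e0 : ‖f (-1)‖ = ∫ _x in B, ‖f (-1)‖ := by
      rw [setIntegral_const, hB, Real.volume_real_Ioc]
      norm_num
    rw [e0]
    calc (∫ _x in B, ‖f (-1)‖)
        ≤ ∫ x in B, (‖f x‖ + ∫ t in B, ‖f' t‖) :=
          setIntegral_mono_on (integrableOn_const hvolB.ne)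
            (hfB.norm.add hconstB) measurableSet_Ioc pt
      _ = (∫ x in B, ‖f x‖) + ∫ x in B, ‖f' x‖ := by
          rw [integral_add hfB.norm hconstB, setIntegral_const, hB, Real.volume_real_Ioc]
          norm_num
  -- conclude
  have htri := norm_add₃_le (E := ℂ)
    (a := Complex.I * f (-1) * ↑(Real.sin (s * (ξ + 1))))
    (b := Complex.I * ∫ t in A, (↑(Real.sin (s * (ξ - t))) : ℂ) * f' t)
    (c := ∫ r in A, Complex.cos (↑s * (↑ξ - ↑r)) * g r)
  have h1 : (∫ x in B, ‖f x‖) ≤ H1norm f f' := le_trans hCSf hH1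
  have h2 : (∫ x in B, ‖f' x‖) ≤ H1norm f f' := le_trans hCSf' hH2
  have h3 : (∫ x in B, ‖g x‖) ≤ L2norm (-1) 0 g := le_of_le_of_eq hCSg hL2
  refine le_trans htri ?_
  have : ‖Complex.I * f (-1) * ↑(Real.sin (s * (ξ + 1)))‖
      + ‖Complex.I * ∫ t in A, (↑(Real.sin (s * (ξ - t))) : ℂ) * f' t‖
      + ‖∫ r in A, Complex.cos (↑s * (↑ξ - ↑r)) * g r‖
      ≤ ((∫ x in B, ‖f x‖) + ∫ x in B, ‖f' x‖) + (∫ x in B, ‖f' x‖) + ∫ x in B, ‖g x‖ := by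
    have := le_trans b1 hc
    linarith [b2, b3]
  refine le_trans this ?_
  linarith [h1, h2, h3]
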